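/- arXiv:1405.4788 — 4 statements merged into one kernel-verified Lean document; each statement's English description precedes it below -/
import Mathlib

section
/- Let n ≥ 2 and let A_1, A_2, …, A_n be nonempty finite sets of non-negative integers (the set-labels of the vertices of the complete graph K_n). Then |A_i + A_j| = |A_i| · |A_j| holds for every pair of distinct indices i ≠ j (i.e., the labeling is a strong labeling of K_n) if and only if the difference sets D_{A_1}, D_{A_2}, …, D_{A_n} are pairwise disjoint. -/
open Pointwise

/-- The difference set of a finite set `X` of non-negative integers:
all differences `x - y` (in `ℤ`) of distinct elements `x, y ∈ X`. -/
def diffSet (X : Finset ℕ) : Set ℤ :=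
  {d : ℤ | ∃ x ∈ X, ∃ y ∈ X, x ≠ y ∧ d = (x : ℤ) - (y : ℤ)}

lemma key (A B : Finset ℕ) :
    (A + B).card = A.card * B.card ↔ diffSet A ∩ diffSet B = ∅ := by
  have himg : (A ×ˢ B).image (fun p : ℕ × ℕ => p.1 + p.2) = A + B :=
    Finset.image_add_product
  rw [← himg, ← Finset.card_product]
  rw [Finset.card_image_iff]
  constructor
  · intro hinj
    ext d
    simp only [Set.mem_inter_iff, Set.mem_empty_iff_false, iff_false]
    rintro ⟨⟨a, ha, a', ha', haa, hda⟩, b, hb, b', hb', hbb, hdb⟩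
    -- d = a - a' = b - b', so a + b' = a' + b
    have h : a + b' = a' + b := by omega
    have := hinj (show ((a, b') : ℕ × ℕ) ∈ ↑(A ×ˢ B) by simp [ha, hb'])
      (show ((a', b) : ℕ × ℕ) ∈ ↑(A ×ˢ B) by simp [ha', hb]) h
    simp at this
    exact haa this.1
  · intro hdisj
    rintro ⟨a, b⟩ hab ⟨a', b'⟩ hab' h
    have h : a + b = a' + b' := h
    simp only [Finset.coe_product, Set.mem_prod, Finset.mem_coe] at hab hab'
    by_cases haa : a = a'
    · subst haa
      have : b = b' := by omega
      simp [this]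
    · exfalso
      have hbb : b ≠ b' := by omega
      have : ((a : ℤ) - a') ∈ diffSet A ∩ diffSet B := by
        constructor
        · exact ⟨a, hab.1, a', hab'.1, haa, rfl⟩
        · refine ⟨b', hab'.2, b, hab.2, fun h' => hbb h'.symm, by omega⟩
      rw [hdisj] at this
      exact this

/-- For nonempty set-labels `A 1, …, A n` (`n ≥ 2`) of the vertices of the complete
graph `K n`, the labeling is strong (i.e. `|A i + A j| = |A i| ⬝ |A j|` for all `i ≠ j`)
iff the difference sets of the `A i` are pairwise disjoint. -/
theorem strong_labeling_completeGraph_iff_pairwise_disjoint_diffSets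
    (n : ℕ) (hn : 2 ≤ n) (A : Fin n → Finset ℕ) (hA : ∀ i, (A i).Nonempty) :
    (∀ i j : Fin n, i ≠ j → (A i + A j).card = (A i).card * (A j).card) ↔
      (∀ i j : Fin n, i ≠ j → diffSet (A i) ∩ diffSet (A j) = ∅) := by
  constructor <;> intro h i j hij
  · exact (key (A i) (A j)).mp (h i j hij)
  · exact (key (A i) (A j)).mpr (h i j hij)
end

section
/- Let f be a strong integer additive set-indexer of the complete graph K_n on n ≥ 2 vertices. Then for any two distinct vertices u and v of K_n, the difference sets D_{f(u)} and D_{f(v)} of their set-labels are disjoint. Consequently, the difference sets of the set-labels of all n vertices of K_n are pairwise disjoint. -/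
open Pointwise

/-- `f` is an integer additive set-indexer (IASI) of `G`: an injective assignment
of nonempty finite sets of non-negative integers to the vertices such that the
induced edge function `uv ↦ f u + f v` (sumset) is injective on the edges. -/
def IsIASI {V : Type*} (G : SimpleGraph V) (f : V → Finset ℕ) : Prop :=
  (∀ v, (f v).Nonempty) ∧ Function.Injective f ∧
    ∀ u v u' v' : V, G.Adj u v → G.Adj u' v' →
      f u + f v = f u' + f v' → s(u, v) = s(u', v')

/-- `f` is a strong IASI of `G`: an IASI with `|f u + f v| = |f u| ⬝ |f v|`
for every edge `uv`. -/
def IsStrongIASI {V : Type*} (G : SimpleGraph V) (f : V → Finset ℕ) : Prop :=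
  IsIASI G f ∧ ∀ u v : V, G.Adj u v → (f u + f v).card = (f u).card * (f v).card

/-- If `f` is a strong IASI of the complete graph `K n` (`n ≥ 2`), then the
difference sets of the set-labels of any two distinct vertices are disjoint;
i.e. the difference sets of the set-labels of all vertices are pairwise disjoint. -/
theorem strongIASI_completeGraph_diffSets_pairwise_disjoint
    (n : ℕ) (hn : 2 ≤ n) (f : Fin n → Finset ℕ)
    (hf : IsStrongIASI (⊤ : SimpleGraph (Fin n)) f) :
    ∀ u v : Fin n, u ≠ v → diffSet (f u) ∩ diffSet (f v) = ∅ := by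
  intro u v huv
  ext d
  simp only [Set.mem_inter_iff, Set.mem_empty_iff_false, iff_false, not_and]
  rintro ⟨x, hx, x', hx', hxx', rfl⟩ ⟨y, hy, y', hy', hyy', hd⟩
  have hcard := hf.2 u v (by simpa using huv)
  have hinj := Finset.card_add_iff.mp hcard
  have hsum : x + y' = x' + y := by
    have : (x : ℤ) + y' = x' + y := by linarith
    exact_mod_cast this
  have := hinj (Set.mk_mem_prod (by exact_mod_cast hx) (by exact_mod_cast hy'))
    (Set.mk_mem_prod (by exact_mod_cast hx') (by exact_mod_cast hy)) hsum
  exact hxx' (congrArg Prod.fst this)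
end

section
/- Let C_n be the cycle on n ≥ 3 vertices and let r ≥ 1 be an integer. Then the clique number of the r-th power of C_n is ω(C_n^r) = r + 1 if r < ⌊n/2⌋, and ω(C_n^r) = n if r ≥ ⌊n/2⌋. -/
/-- The `r`-th power of a simple graph `G`: two distinct vertices are adjacent
iff their distance in `G` is at most `r` (in particular they are connected in `G`). -/
def SimpleGraph.power {V : Type*} (G : SimpleGraph V) (r : ℕ) : SimpleGraph V :=
  SimpleGraph.fromRel (fun u v => G.Reachable u v ∧ G.dist u v ≤ r)

open Fin.NatCast Fin.CommRing

section Aux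

lemma fin_sub_val {n : ℕ} (a b : Fin n) :
    (a - b).val + b.val = a.val ∨ (a - b).val + b.val = a.val + n := by
  have h := Fin.coe_int_sub_eq_ite a b
  have h1 : ((a - b : Fin n) : ℤ) = ((a - b).val : ℤ) := rfl
  split at h <;> omega

lemma cycle_connected {n : ℕ} (hn : 2 ≤ n) : (SimpleGraph.cycleGraph n).Connected := by
  obtain ⟨m, rfl⟩ : ∃ m, n = m + 1 := ⟨n - 1, by omega⟩
  exact SimpleGraph.cycleGraph_connected

lemma cycle_adj_succ {n : ℕ} [NeZero n] (hn : 2 ≤ n) (c : Fin n) :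
    (SimpleGraph.cycleGraph n).Adj c (c + 1) := by
  rw [SimpleGraph.cycleGraph_adj']
  right
  have h : c + 1 - c = 1 := by ring
  rw [h, Fin.val_one']
  exact Nat.mod_eq_of_lt (by omega)

lemma cycle_dist_add_le {n : ℕ} [NeZero n] (hn : 2 ≤ n) (u : Fin n) (k : ℕ) :
    (SimpleGraph.cycleGraph n).dist u (u + (k : Fin n)) ≤ k := by
  induction k with
  | zero => simp
  | succ k ih =>
    have hconn := cycle_connected hn
    have hcast : ((k + 1 : ℕ) : Fin n) = (k : Fin n) + 1 := by push_cast; ring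
    rw [hcast, ← add_assoc]
    calc (SimpleGraph.cycleGraph n).dist u (u + (k : Fin n) + 1)
        ≤ (SimpleGraph.cycleGraph n).dist u (u + (k : Fin n)) +
          (SimpleGraph.cycleGraph n).dist (u + (k : Fin n)) (u + (k : Fin n) + 1) :=
          hconn.dist_triangle
      _ ≤ k + 1 := by
          have := SimpleGraph.dist_eq_one_iff_adj.mpr (cycle_adj_succ hn (u + (k : Fin n)))
          omega

lemma cycle_walk_ge {n : ℕ} {u v : Fin n} (p : (SimpleGraph.cycleGraph n).Walk u v) :
    min (v - u).val (u - v).val ≤ p.length := by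
  induction p with
  | nil =>
    rename_i w
    have e := fin_sub_val w w
    have l : (w - w).val < n := (w - w).isLt
    simp only [SimpleGraph.Walk.length_nil]
    omega
  | @cons u w v h p ih =>
    rw [SimpleGraph.cycleGraph_adj'] at h
    have e1 := fin_sub_val v u
    have e2 := fin_sub_val u v
    have e3 := fin_sub_val v w
    have e4 := fin_sub_val w v
    have e5 := fin_sub_val u w
    have e6 := fin_sub_val w u
    have l1 : (v - u).val < n := (v - u).isLt
    have l2 : (u - v).val < n := (u - v).isLt
    have l3 : (v - w).val < n := (v - w).isLt
    have l4 : (w - v).val < n := (w - v).isLt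
    have l5 : (u - w).val < n := (u - w).isLt
    have l6 : (w - u).val < n := (w - u).isLt
    simp only [SimpleGraph.Walk.length_cons]
    omega

lemma cycle_dist_eq {n : ℕ} [NeZero n] (hn : 2 ≤ n) (u v : Fin n) :
    (SimpleGraph.cycleGraph n).dist u v = min (v - u).val (u - v).val := by
  apply le_antisymm
  · apply le_min
    · have h := cycle_dist_add_le hn u (v - u).val
      rwa [Fin.cast_val_eq_self, add_sub_cancel] at h
    · rw [SimpleGraph.dist_comm]
      have h := cycle_dist_add_le hn v (u - v).val
      rwa [Fin.cast_val_eq_self, add_sub_cancel] at h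
  · obtain ⟨p, hp⟩ := ((cycle_connected hn) u v).exists_walk_length_eq_dist
    rw [← hp]
    exact cycle_walk_ge p

lemma power_adj {n : ℕ} [NeZero n] (hn : 2 ≤ n) (r : ℕ) (u v : Fin n) :
    ((SimpleGraph.cycleGraph n).power r).Adj u v ↔
      u ≠ v ∧ min (v - u).val (u - v).val ≤ r := by
  simp only [SimpleGraph.power, SimpleGraph.fromRel_adj]
  constructor
  · rintro ⟨hne, (⟨_, h⟩ | ⟨_, h⟩)⟩
    · rw [cycle_dist_eq hn] at h
      exact ⟨hne, h⟩
    · rw [cycle_dist_eq hn, Nat.min_comm] at h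
      exact ⟨hne, h⟩
  · rintro ⟨hne, h⟩
    refine ⟨hne, Or.inl ⟨(cycle_connected hn) u v, ?_⟩⟩
    rw [cycle_dist_eq hn]
    exact h

lemma clique_card_le {n r : ℕ} (hn : 3 ≤ n) (hrn : 2 * r + 2 ≤ n)
    (s : Finset (Fin n))
    (hs : ∀ u ∈ s, ∀ v ∈ s, u ≠ v → min (v - u).val (u - v).val ≤ r) :
    s.card ≤ r + 1 := by
  haveI : NeZero n := ⟨by omega⟩
  by_cases hcard : s.card ≤ 1
  · omega
  push_neg at hcard
  obtain ⟨a, ha, b, hb, hab⟩ := Finset.one_lt_card.mp hcard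
  have hPne : ((s ×ˢ s).filter (fun p => p.1 ≠ p.2)).Nonempty := by
    refine ⟨(a, b), ?_⟩
    rw [Finset.mem_filter, Finset.mem_product]
    exact ⟨⟨ha, hb⟩, hab⟩
  obtain ⟨q, hq, hqmax⟩ := Finset.exists_max_image _
    (fun p : Fin n × Fin n => min ((p.2 - p.1).val) ((p.1 - p.2).val)) hPne
  rw [Finset.mem_filter, Finset.mem_product] at hq
  obtain ⟨⟨hq1, hq2⟩, hqne⟩ := hq
  set δ : ℕ := min ((q.2 - q.1).val) ((q.1 - q.2).val) with hδdef
  have hδr : δ ≤ r := hs q.1 hq1 q.2 hq2 hqne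
  have hpair : ∀ u ∈ s, ∀ v ∈ s, u ≠ v →
      min ((v - u).val) ((u - v).val) ≤ δ := by
    intro u hu v hv huv
    exact hqmax (u, v) (by
      rw [Finset.mem_filter, Finset.mem_product]
      exact ⟨⟨hu, hv⟩, huv⟩)
  -- WLOG the pair is oriented so that (y - x).val = δ
  suffices H : ∀ x ∈ s, ∀ y ∈ s, x ≠ y → (y - x).val = δ → s.card ≤ r + 1 by
    rcases min_choice ((q.2 - q.1).val) ((q.1 - q.2).val) with h | h
    · exact H q.1 hq1 q.2 hq2 hqne (h ▸ hδdef.symm)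
    · exact H q.2 hq2 q.1 hq1 (Ne.symm hqne) (h ▸ hδdef.symm)
  clear hcard hab ha hb hqmax hq1 hq2 hqne
  intro x hx y hy hxy hyx
  have hδ1 : 1 ≤ δ := by
    have e := fin_sub_val y x
    have l := (y - x).isLt
    have hne : y.val ≠ x.val := fun e' => hxy (Fin.ext e'.symm)
    have lx := x.isLt
    omega
  set ι : Fin n → ℤ := fun v =>
    if (v - x).val ≤ δ then ((v - x).val : ℤ) else ((v - x).val : ℤ) - n with hι
  have hιval : ∀ v : Fin n, ι v = ((v - x).val : ℤ) ∨ ι v = ((v - x).val : ℤ) - n := by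
    intro v
    simp only [hι]
    split_ifs <;> [left; right] <;> rfl
  have hxx : (x - x).val = 0 := by
    have := fin_sub_val x x
    have := (x - x).isLt
    omega
  have hιx : ι x = 0 := by simp only [hι]; simp [hxx]
  have hιy : ι y = (δ : ℤ) := by simp only [hι]; simp [hyx]
  -- range of ι on s
  have hrange : ∀ u ∈ s, (0 ≤ ι u ∧ ι u ≤ (δ : ℤ)) ∨
      ((ι u = ((u - x).val : ℤ) - n) ∧ (-(δ:ℤ)) ≤ ι u ∧ ι u ≤ -1) := by
    intro u hu
    by_cases hux : u = x
    · subst hux; left; rw [hιx]; omega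
    · have hp := hpair x hx u hu (fun e => hux e.symm)
      have e1 := fin_sub_val u x
      have e2 := fin_sub_val x u
      have l1 := (u - x).isLt
      have l2 := (x - u).isLt
      have hne : u.val ≠ x.val := fun e => hux (Fin.ext e)
      simp only [hι]
      split_ifs with h
      · left; constructor <;> omega
      · right
        refine ⟨rfl, ?_, ?_⟩ <;> omega
  -- key pairwise property
  have hkey : ∀ u ∈ s, ∀ v ∈ s,
      (-(δ:ℤ) ≤ ι u - ι v ∧ ι u - ι v ≤ (δ:ℤ)) ∨
      ((n:ℤ) - δ ≤ ι u - ι v) ∨ (ι u - ι v ≤ (δ:ℤ) - (n:ℤ)) := by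
    intro u hu v hv
    by_cases huv : u = v
    · subst huv; left; omega
    · have hmin := hpair u hu v hv huv
      have rel1 : u - v = (u - x) - (v - x) := by ring
      have e0 := fin_sub_val (u - x) (v - x)
      rw [← rel1] at e0
      have rel2 : v - u = (v - x) - (u - x) := by ring
      have e0' := fin_sub_val (v - x) (u - x)
      rw [← rel2] at e0'
      have l1 := (u - v).isLt
      have l2 := (v - u).isLt
      have l3 := (u - x).isLt
      have l4 := (v - x).isLt
      have hu' := hιval u
      have hv' := hιval v
      omega
  have hB2 : ∀ u ∈ s, ι u ≤ -1 → ι u ≤ 2*(δ:ℤ) - n := by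
    intro u hu hneg
    have := hkey u hu y hy
    rw [hιy] at this
    have hr := hrange u hu
    omega
  -- injectivity
  have hinj : Set.InjOn ι s := by
    intro u hu v hv he
    have hu' := hιval u
    have hv' := hιval v
    have l3 := (u - x).isLt
    have l4 := (v - x).isLt
    have : (u - x).val = (v - x).val := by omega
    have : u - x = v - x := Fin.val_injective this
    exact sub_left_injective this
  set T := s.image ι with hT
  have hTcard : T.card = s.card := Finset.card_image_of_injOn hinj
  have hmemT : ∀ a ∈ T, ∃ u ∈ s, ι u = a := by
    intro a haT
    rw [hT, Finset.mem_image] at haT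
    exact haT
  set A := T.filter (fun a => (0:ℤ) ≤ a) with hA
  set B := T.filter (fun a => ¬ ((0:ℤ) ≤ a)) with hB
  have hABcard : A.card + B.card = T.card :=
    Finset.card_filter_add_card_filter_not _
  have hAsub : A ⊆ Finset.Icc (0:ℤ) (δ:ℤ) := by
    intro a haA
    rw [hA, Finset.mem_filter] at haA
    obtain ⟨u, hu, rfl⟩ := hmemT a haA.1
    rcases hrange u hu with h | h
    · exact Finset.mem_Icc.mpr ⟨h.1, h.2⟩
    · exact absurd haA.2 (by omega)
  have hIccCard : (Finset.Icc (0:ℤ) (δ:ℤ)).card = δ + 1 := by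
    rw [Int.card_Icc]
    omega
  by_cases hB0 : B = ∅
  · have := Finset.card_le_card hAsub
    rw [hIccCard] at this
    have : s.card = A.card := by rw [← hTcard, ← hABcard, hB0]; simp
    omega
  · have hBne : B.Nonempty := Finset.nonempty_iff_ne_empty.mpr hB0
    have hBprop : ∀ z ∈ B, -(δ:ℤ) ≤ z ∧ z ≤ 2*(δ:ℤ) - n := by
      intro z hz
      rw [hB, Finset.mem_filter] at hz
      obtain ⟨u, hu, rfl⟩ := hmemT z hz.1
      rcases hrange u hu with h | h
      · exact absurd h.1 hz.2
      · exact ⟨h.2.1, hB2 u hu h.2.2⟩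
    set z₀ := B.min' hBne with hz₀def
    have hz₀B : z₀ ∈ B := B.min'_mem hBne
    set R := B.image (fun z => z + ((n:ℤ) - δ - 1)) with hR
    have hRcard : R.card = B.card :=
      Finset.card_image_of_injective _ (add_left_injective _)
    set W := Finset.Icc (z₀ + δ + 1) (z₀ + (n:ℤ) - δ - 2) with hW
    have hWcard : W.card = ((n:ℤ) - 2*δ - 2).toNat := by
      rw [hW, Int.card_Icc]
      congr 1
      ring
    have hRsub : R ⊆ Finset.Icc (0:ℤ) (δ:ℤ) := by
      intro c hc
      rw [hR, Finset.mem_image] at hc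
      obtain ⟨z, hz, rfl⟩ := hc
      have := hBprop z hz
      rw [Finset.mem_Icc]
      omega
    have hWsub : W ⊆ Finset.Icc (0:ℤ) (δ:ℤ) := by
      intro c hc
      rw [hW, Finset.mem_Icc] at hc
      have := hBprop z₀ hz₀B
      rw [Finset.mem_Icc]
      omega
    -- disjointness
    have hTA : ∀ a ∈ A, a ∈ T := fun a haA => (Finset.mem_filter.mp (hA ▸ haA)).1
    have hTB : ∀ z ∈ B, z ∈ T := fun z hz => (Finset.mem_filter.mp (hB ▸ hz)).1
    have dAR : Disjoint A R := by
      rw [Finset.disjoint_left]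
      intro c hcA hcR
      rw [hR, Finset.mem_image] at hcR
      obtain ⟨z, hz, rfl⟩ := hcR
      obtain ⟨u, hu, hu'⟩ := hmemT _ (hTA _ hcA)
      obtain ⟨v, hv, hv'⟩ := hmemT _ (hTB _ hz)
      have := hkey u hu v hv
      rw [hu', hv'] at this
      omega
    have dAW : Disjoint A W := by
      rw [Finset.disjoint_left]
      intro c hcA hcW
      rw [hW, Finset.mem_Icc] at hcW
      obtain ⟨u, hu, hu'⟩ := hmemT _ (hTA _ hcA)
      obtain ⟨v, hv, hv'⟩ := hmemT _ (hTB _ hz₀B)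
      have := hkey u hu v hv
      rw [hu', hv'] at this
      omega
    have dRW : Disjoint R W := by
      rw [Finset.disjoint_left]
      intro c hcR hcW
      rw [hR, Finset.mem_image] at hcR
      obtain ⟨z, hz, rfl⟩ := hcR
      rw [hW, Finset.mem_Icc] at hcW
      have := B.min'_le z hz
      omega
    have hUsub : A ∪ R ∪ W ⊆ Finset.Icc (0:ℤ) (δ:ℤ) := by
      intro c hc
      rcases Finset.mem_union.mp hc with hc | hc
      · rcases Finset.mem_union.mp hc with hc | hc
        · exact hAsub hc
        · exact hRsub hc
      · exact hWsub hc
    have hUcard : (A ∪ R ∪ W).card = A.card + R.card + W.card := by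
      rw [Finset.card_union_of_disjoint (Finset.disjoint_union_left.mpr ⟨dAW, dRW⟩),
        Finset.card_union_of_disjoint dAR]
    have hle := Finset.card_le_card hUsub
    rw [hUcard, hIccCard, hRcard, hWcard] at hle
    have hscard : s.card = A.card + B.card := by rw [← hTcard, hABcard]
    omega

end Aux

/-- For the cycle `C_n` (`n ≥ 3`) and `r ≥ 1`, the clique number of `C_n^r`
is `r + 1` if `r < ⌊n/2⌋`, and `n` if `r ≥ ⌊n/2⌋`. -/
theorem cliqueNum_power_cycleGraph (n r : ℕ) (hn : 3 ≤ n) (hr : 1 ≤ r) :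
    (r < n / 2 → ((SimpleGraph.cycleGraph n).power r).cliqueNum = r + 1) ∧
      (n / 2 ≤ r → ((SimpleGraph.cycleGraph n).power r).cliqueNum = n) := by
  haveI : NeZero n := ⟨by omega⟩
  have hn2 : 2 ≤ n := by omega
  constructor
  · intro hrn
    have hrn' : 2 * r + 2 ≤ n := by omega
    apply le_antisymm
    · obtain ⟨t, ht⟩ := ((SimpleGraph.cycleGraph n).power r).exists_isNClique_cliqueNum
      rw [← ht.card_eq]
      apply clique_card_le hn hrn' t
      intro u hu v hv huv
      have := ht.isClique (Finset.mem_coe.mpr hu) (Finset.mem_coe.mpr hv) huv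
      exact ((power_adj hn2 r u v).mp this).2
    · -- the clique {0, 1, ..., r}
      set C : Finset (Fin n) := (Finset.range (r + 1)).image (fun i : ℕ => (↑i : Fin n)) with hC
      have hval : ∀ i ∈ Finset.range (r + 1), ((i : Fin n)).val = i := by
        intro i hi
        rw [Finset.mem_range] at hi
        rw [Fin.val_natCast]
        exact Nat.mod_eq_of_lt (by omega)
      have hCcard : C.card = r + 1 := by
        rw [hC, Finset.card_image_of_injOn, Finset.card_range]
        intro i hi j hj hij
        have h2 : ((i : Fin n)).val = ((j : Fin n)).val := congrArg Fin.val hij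
        rwa [hval i (by simpa using hi), hval j (by simpa using hj)] at h2
      have hkeyval : ∀ i j : ℕ, i ∈ Finset.range (r + 1) → j ∈ Finset.range (r + 1) →
          i < j → (((j : Fin n) - (i : Fin n)).val) = j - i := by
        intro i j hi hj hij
        rw [Finset.mem_range] at hi hj
        have hsub : ((j - i : ℕ) : Fin n) = (j : Fin n) - (i : Fin n) :=
          Nat.cast_sub (by omega)
        rw [← hsub, Fin.val_natCast]
        exact Nat.mod_eq_of_lt (by omega)
      have hclique : ((SimpleGraph.cycleGraph n).power r).IsClique (C : Set (Fin n)) := by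
        intro u hu v hv huv
        rw [Finset.mem_coe, hC, Finset.mem_image] at hu hv
        obtain ⟨i, hi, rfl⟩ := hu
        obtain ⟨j, hj, rfl⟩ := hv
        rw [power_adj hn2]
        refine ⟨huv, ?_⟩
        have hij : i ≠ j := fun e => huv (by rw [e])
        rcases Nat.lt_or_ge i j with h | h
        · have := hkeyval i j hi hj h
          have hj' := Finset.mem_range.mp hj
          calc min (((j : Fin n) - (i : Fin n)).val) (((i : Fin n) - (j : Fin n)).val)
              ≤ (((j : Fin n) - (i : Fin n)).val) := min_le_left _ _
            _ ≤ r := by omega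
        · have hji : j < i := by omega
          have := hkeyval j i hj hi hji
          have hi' := Finset.mem_range.mp hi
          calc min (((j : Fin n) - (i : Fin n)).val) (((i : Fin n) - (j : Fin n)).val)
              ≤ (((i : Fin n) - (j : Fin n)).val) := min_le_right _ _
            _ ≤ r := by omega
      calc r + 1 = C.card := hCcard.symm
        _ ≤ ((SimpleGraph.cycleGraph n).power r).cliqueNum :=
            SimpleGraph.IsClique.card_le_cliqueNum (tc := hclique)
  · intro hrn
    apply le_antisymm
    · obtain ⟨t, ht⟩ := ((SimpleGraph.cycleGraph n).power r).exists_isNClique_cliqueNum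
      rw [← ht.card_eq]
      calc t.card ≤ (Finset.univ : Finset (Fin n)).card := Finset.card_le_univ t
        _ = n := by rw [Finset.card_univ, Fintype.card_fin]
    · have hclique : ((SimpleGraph.cycleGraph n).power r).IsClique
          ((Finset.univ : Finset (Fin n)) : Set (Fin n)) := by
        intro u _ v _ huv
        rw [power_adj hn2]
        refine ⟨huv, ?_⟩
        have e1 := fin_sub_val v u
        have e2 := fin_sub_val u v
        have l1 : (v - u).val < n := (v - u).isLt
        have l2 : (u - v).val < n := (u - v).isLt
        have hne : u.val ≠ v.val := fun e => huv (Fin.ext e)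
        omega
      calc n = (Finset.univ : Finset (Fin n)).card := by
            rw [Finset.card_univ, Fintype.card_fin]
        _ ≤ ((SimpleGraph.cycleGraph n).power r).cliqueNum :=
            SimpleGraph.IsClique.card_le_cliqueNum (tc := hclique)
end

section
/- Let H_n be the helm graph on 2n + 1 vertices, with n ≥ 4. Then the clique number of the square of H_n is ω(H_n^2) = n + 1. -/
/-- The helm graph `H_n` on `2n + 1` vertices: a wheel (hub `Sum.inl none` joined to
every cycle vertex `Sum.inl (some i)`, the cycle vertices forming the cycle `C_n`)
together with a pendant vertex `Sum.inr i` attached to the cycle vertex `some i`. -/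
def helmGraph (n : ℕ) : SimpleGraph (Option (ZMod n) ⊕ ZMod n) :=
  SimpleGraph.fromRel (fun a b =>
    match a, b with
    | Sum.inl none, Sum.inl (some _) => True
    | Sum.inl (some i), Sum.inl (some j) => j = i + 1
    | Sum.inl (some i), Sum.inr j => i = j
    | _, _ => False)

lemma power_adj_of_walk {V : Type*} {G : SimpleGraph V} {u v : V} (hne : u ≠ v)
    (p : G.Walk u v) (hp : p.length ≤ 2) : (G.power 2).Adj u v :=
  ⟨hne, Or.inl ⟨p.reachable, (SimpleGraph.dist_le p).trans hp⟩⟩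

lemma power_adj_walk {V : Type*} {G : SimpleGraph V} {u v : V} (h : (G.power 2).Adj u v) :
    u ≠ v ∧ ∃ p : G.Walk u v, p.length ≤ 2 := by
  obtain ⟨hne, h | h⟩ := h
  · obtain ⟨p, hp⟩ := h.1.exists_walk_length_eq_dist
    exact ⟨hne, p, hp ▸ h.2⟩
  · obtain ⟨p, hp⟩ := h.1.exists_walk_length_eq_dist
    exact ⟨hne, p.reverse, by simpa [hp] using h.2⟩

/-- Neighbors of a pendant vertex in the helm graph. -/
lemma helm_adj_inr {n : ℕ} {i : ZMod n} {x : Option (ZMod n) ⊕ ZMod n}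
    (h : (helmGraph n).Adj (Sum.inr i) x) : x = Sum.inl (some i) := by
  obtain ⟨hne, h | h⟩ := h
  · cases x <;> simp_all [helmGraph]
  · rcases x with (_ | j) | j <;> simp_all

/-- Neighbors of a cycle vertex in the helm graph. -/
lemma helm_adj_some {n : ℕ} {i : ZMod n} {x : Option (ZMod n) ⊕ ZMod n}
    (h : (helmGraph n).Adj (Sum.inl (some i)) x) :
    x = Sum.inl none ∨ x = Sum.inl (some (i + 1)) ∨ x = Sum.inl (some (i - 1)) ∨
      x = Sum.inr i := by
  obtain ⟨hne, h | h⟩ := h <;> rcases x with (_ | j) | j <;> simp_all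

/-- For `n ≥ 4`, the clique number of the square of the helm graph `H_n` is `n + 1`. -/
theorem cliqueNum_helmGraph_sq (n : ℕ) (hn : 4 ≤ n) :
    ((helmGraph n).power 2).cliqueNum = n + 1 := by
  haveI : NeZero n := ⟨by omega⟩
  -- adjacency between distinct `inl` vertices in the square
  have key : ∀ a b : Option (ZMod n), a ≠ b →
      ((helmGraph n).power 2).Adj (Sum.inl a) (Sum.inl b) := by
    have hub : ∀ j : ZMod n, (helmGraph n).Adj (Sum.inl none) (Sum.inl (some j)) := by
      intro j
      exact ⟨by simp, Or.inl (by simp [helmGraph])⟩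
    rintro (_ | i) (_ | j) hne
    · simp at hne
    · exact power_adj_of_walk (by simpa using hne)
        ((hub j).toWalk) (by simp)
    · exact power_adj_of_walk (by simpa using hne)
        ((hub i).toWalk.reverse) (by simp)
    · exact power_adj_of_walk (by simpa using hne)
        (((hub i).symm.toWalk).append ((hub j).toWalk)) (by simp)
  -- neighbors of a pendant vertex in the square
  have pend : ∀ (i : ZMod n) (x : Option (ZMod n) ⊕ ZMod n),
      ((helmGraph n).power 2).Adj (Sum.inr i) x →
      x ∈ ({Sum.inl none, Sum.inl (some (i + 1)), Sum.inl (some (i - 1)),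
            Sum.inl (some i)} : Finset (Option (ZMod n) ⊕ ZMod n)) := by
    intro i x h
    obtain ⟨hne, p, hp⟩ := power_adj_walk h
    cases p with
    | nil => exact absurd rfl hne
    | cons h₁ q =>
      have h₁' := helm_adj_inr h₁
      subst h₁'
      cases q with
      | nil => simp
      | cons h₂ q₂ =>
        cases q₂ with
        | nil =>
          rcases helm_adj_some h₂ with h | h | h | h <;> subst h <;> simp
          exact absurd rfl hne
        | cons _ _ => simp [SimpleGraph.Walk.length_cons] at hp
    -- done
  apply le_antisymm
  · -- upper bound
    obtain ⟨s, hs⟩ := ((helmGraph n).power 2).exists_isNClique_cliqueNum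
    rw [← hs.card_eq]
    by_cases hp : ∃ i : ZMod n, Sum.inr i ∈ s
    · obtain ⟨i, hi⟩ := hp
      have hsub : s ⊆ insert (Sum.inr i)
          ({Sum.inl none, Sum.inl (some (i + 1)), Sum.inl (some (i - 1)),
            Sum.inl (some i)} : Finset (Option (ZMod n) ⊕ ZMod n)) := by
        intro x hx
        by_cases hxi : x = Sum.inr i
        · simp [hxi]
        · exact Finset.mem_insert_of_mem (pend i x (hs.1 hi hx (Ne.symm hxi)))
      calc s.card ≤ _ := Finset.card_le_card hsub
        _ ≤ 5 := (Finset.card_insert_le _ _).trans (by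
            have := Finset.card_insert_le (Sum.inl none : Option (ZMod n) ⊕ ZMod n)
              ({Sum.inl (some (i + 1)), Sum.inl (some (i - 1)),
                Sum.inl (some i)} : Finset (Option (ZMod n) ⊕ ZMod n))
            have h2 := Finset.card_insert_le (Sum.inl (some (i + 1)) : Option (ZMod n) ⊕ ZMod n)
              ({Sum.inl (some (i - 1)), Sum.inl (some i)} : Finset (Option (ZMod n) ⊕ ZMod n))
            have h3 := Finset.card_insert_le (Sum.inl (some (i - 1)) : Option (ZMod n) ⊕ ZMod n)
              ({Sum.inl (some i)} : Finset (Option (ZMod n) ⊕ ZMod n))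
            simp only [Finset.card_singleton] at *
            omega)
        _ ≤ n + 1 := by omega
    · push_neg at hp
      have hsub : s ⊆ (Finset.univ : Finset (Option (ZMod n))).image Sum.inl := by
        intro x hx
        rcases x with a | j
        · simp
        · exact absurd hx (hp j)
      calc s.card ≤ _ := Finset.card_le_card hsub
        _ ≤ Fintype.card (Option (ZMod n)) := Finset.card_image_le.trans (by simp)
        _ = n + 1 := by simp [ZMod.card]
  · -- lower bound: the hub and cycle vertices form an (n+1)-clique
    have hclique : ((helmGraph n).power 2).IsClique
        (((Finset.univ : Finset (Option (ZMod n))).image Sum.inl :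
          Finset (Option (ZMod n) ⊕ ZMod n)) : Set (Option (ZMod n) ⊕ ZMod n)) := by
      intro x hx y hy hxy
      simp only [Finset.coe_image, Set.mem_image] at hx hy
      obtain ⟨a, -, rfl⟩ := hx
      obtain ⟨b, -, rfl⟩ := hy
      exact key a b (fun h => hxy (by rw [h]))
    have hcard : ((Finset.univ : Finset (Option (ZMod n))).image
        (Sum.inl : Option (ZMod n) → Option (ZMod n) ⊕ ZMod n)).card = n + 1 := by
      rw [Finset.card_image_of_injective _ Sum.inl_injective]
      simp [ZMod.card]
    have hle := SimpleGraph.IsClique.card_le_cliqueNum (tc := hclique)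
    rwa [hcard] at hle
end
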